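/- Let k be a field and s, t ∈ k. Define the maps A_s, B_t, C_u on Zorn vector matrices by A_s(a, (v₁,v₂,v₃), (w₁,w₂,w₃), d) = (a, (v₁, v₂ − s·v₃, v₃), (w₁, w₂, w₃ + s·w₂), d), B_t(a, (v₁,v₂,v₃), (w₁,w₂,w₃), d) = (a, (v₁, v₂, v₃ − t·v₁), (w₁ + t·w₃, w₂, w₃), d), and C_u(a, (v₁,v₂,v₃), (w₁,w₂,w₃), d) = (a, (v₁, v₂ − u·v₁, v₃), (w₁ + u·w₂, w₂, w₃), d). Then the Chevalley commutator relation [B_t, A_s] = C_{st} holds: B_{−t} ∘ A_{−s} ∘ B_t ∘ A_s = C_{st}. -/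

import Mathlib

open Matrix

/-- A Zorn vector matrix (split octonion) over `k`. -/
abbrev Zorn (k : Type*) := k × (Fin 3 → k) × (Fin 3 → k) × k

variable {k : Type*} [Field k]

/-- The Chevalley generator `γ_ι⁺(s)` acting on Zorn vector matrices. -/
def Agen (s : k) (x : Zorn k) : Zorn k :=
  (x.1, ![x.2.1 0, x.2.1 1 - s * x.2.1 2, x.2.1 2],
   ![x.2.2.1 0, x.2.2.1 1, x.2.2.1 2 + s * x.2.2.1 1], x.2.2.2)

/-- The Chevalley generator `γ_ȷ⁺(t)` acting on Zorn vector matrices. -/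
def Bgen (t : k) (x : Zorn k) : Zorn k :=
  (x.1, ![x.2.1 0, x.2.1 1, x.2.1 2 - t * x.2.1 0],
   ![x.2.2.1 0 + t * x.2.2.1 2, x.2.2.1 1, x.2.2.1 2], x.2.2.2)

/-- The Chevalley generator `γ_κ⁻(u)` acting on Zorn vector matrices. -/
def Cgen (u : k) (x : Zorn k) : Zorn k :=
  (x.1, ![x.2.1 0, x.2.1 1 - u * x.2.1 0, x.2.1 2],
   ![x.2.2.1 0 + u * x.2.2.1 1, x.2.2.1 1, x.2.2.1 2], x.2.2.2)

/-- The Chevalley commutator relation `[B_t, A_s] = C_{st}`. -/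
theorem chevalley_commutator (s t : k) :
    Bgen (-t) ∘ Agen (-s) ∘ Bgen t ∘ Agen s = Cgen (s * t) := by
  funext x
  simp only [Function.comp, Agen, Bgen, Cgen]
  refine Prod.ext ?_ (Prod.ext ?_ (Prod.ext ?_ ?_)) <;>
    simp <;> ring
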